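/- A perfect matching M of a bipartite graph G on n vertices is the unique perfect matching of G if and only if D(G,M) is acyclic (equivalently, |V(D(G,M))| = n/2 and D(G,M) has no directed cycle). -/

import Mathlib

open SimpleGraph

variable {V : Type*}

/-- `M` is a matching in `G`: a set of edges of `G`, pairwise not sharing a vertex. -/
def IsMatchingIn (G : SimpleGraph V) (M : Set (Sym2 V)) : Prop :=
  M ⊆ G.edgeSet ∧ ∀ e ∈ M, ∀ f ∈ M, e ≠ f → ∀ v : V, ¬(v ∈ e ∧ v ∈ f)

/-- The set of vertices saturated by the edge set `M`. -/
def sat (M : Set (Sym2 V)) : Set V := {v | ∃ e ∈ M, v ∈ e}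

/-- A list of edges alternates w.r.t. `M` if consecutive edges alternate membership in `M`. -/
def Alternates (M : Set (Sym2 V)) (l : List (Sym2 V)) : Prop :=
  l.Chain' (fun e f => (e ∈ M ↔ f ∉ M))

/-- An `M`-alternating cycle: an even cycle whose edges alternate between `M` and `E \ M`. -/
def IsAltCycle (G : SimpleGraph V) (M : Set (Sym2 V)) {v : V} (c : G.Walk v v) : Prop :=
  c.IsCycle ∧ c.edges.length % 2 = 0 ∧ Alternates M c.edges

/-- `M` is uniquely restricted: it is the unique perfect matching of the subgraph of `G`
induced by the `M`-saturated vertices. -/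
def UniquelyRestricted (G : SimpleGraph V) (M : Set (Sym2 V)) : Prop :=
  IsMatchingIn G M ∧ ∀ N : Set (Sym2 V), IsMatchingIn G N →
    (∀ e ∈ N, ∀ v ∈ e, v ∈ sat M) → sat N = sat M → N = M

/-- Arc relation of the digraph `D(G,M)` for a bipartite graph with class `X`:
an arc `x₁ → x₂` between distinct `M`-saturated `X`-vertices whenever
`(x₁, x₂') ∈ E \ M`, where `x₂'` is the `M`-partner of `x₂`. -/
def DArc (G : SimpleGraph V) (M : Set (Sym2 V)) (X : Set V) (x₁ x₂ : V) : Prop :=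
  x₁ ∈ X ∧ x₂ ∈ X ∧ x₁ ≠ x₂ ∧ (∃ y, s(x₁, y) ∈ M) ∧
    ∃ y, s(x₂, y) ∈ M ∧ s(x₁, y) ∈ G.edgeSet ∧ s(x₁, y) ∉ M

/-- a perfect matching `M` of a bipartite graph `G` is the unique
perfect matching of `G` iff `D(G,M)` is acyclic. -/

private lemma cycle_extract' {α : Type*} {r : α → α → Prop} :
    ∀ n (cl : List α), cl.length = n → 2 ≤ cl.length → cl.Chain' r →
      (∀ h : cl ≠ [], cl.getLast h = cl.head h) →
      ∃ d : List α, 2 ≤ d.length ∧ d.Chain' r ∧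
        (∀ h : d ≠ [], d.getLast h = d.head h) ∧ d.dropLast.Nodup := by
  intro n
  induction n using Nat.strong_induction_on with
  | _ n ih =>
    intro cl hn hlen hchain hcyc
    by_cases hnod : cl.dropLast.Nodup
    · exact ⟨cl, hlen, hchain, hcyc, hnod⟩
    · rw [List.nodup_iff_injective_get, Function.not_injective_iff] at hnod
      obtain ⟨i0, j0, hij0, hne0⟩ := hnod
      have key : ∀ (i j : Fin cl.dropLast.length), (i : ℕ) < (j : ℕ) →
          cl.dropLast.get i = cl.dropLast.get j →
          ∃ d : List α, 2 ≤ d.length ∧ d.Chain' r ∧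
            (∀ h : d ≠ [], d.getLast h = d.head h) ∧ d.dropLast.Nodup := by
        intro i j hlt hij
        have hm : cl.dropLast.length = cl.length - 1 := by simp
        have hjc : (j : ℕ) < cl.length - 1 := hm ▸ j.2
        have hic : (i : ℕ) < cl.length - 1 := hm ▸ i.2
        set d : List α := (cl.drop i).take (j - i + 1) with hd
        have hdlen : d.length = j - i + 1 := by
          simp [hd]; omega
        have hcij : cl[(i:ℕ)]'(by omega) = cl[(j:ℕ)]'(by omega) := by
          have h1 := List.getElem_dropLast (xs := cl) (i := i) i.2
          have h2 := List.getElem_dropLast (xs := cl) (i := j) j.2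
          simp only [List.get_eq_getElem] at hij
          rw [← h1, ← h2]; exact hij
        have idx : ∀ (a b : ℕ) (ha : a < cl.length) (hb : b < cl.length), a = b →
            cl[a] = cl[b] := by
          intro a b ha hb h; subst h; rfl
        have idxd : ∀ (a b : ℕ) (ha : a < d.length) (hb : b < d.length), a = b →
            d[a] = d[b] := by
          intro a b ha hb h; subst h; rfl
        have h3 : ∀ (k : ℕ) (hk : k ≤ (j:ℕ) - (i:ℕ)),
            d[k]'(by rw [hdlen]; omega) = cl[(i:ℕ)+k]'(by omega) := by
          intro k hk
          exact (List.getElem_take ..).trans (List.getElem_drop ..)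
        refine ih d.length (by omega) d rfl (by omega)
          (List.IsChain.take (hchain.drop i) _) ?_
        intro hne
        have h1 : d.getLast hne = d[d.length - 1]'(by omega) := List.getLast_eq_getElem ..
        have h2 : d.head hne = d[0]'(by omega) := List.head_eq_getElem_zero hne
        calc d.getLast hne = d[d.length - 1]'(by omega) := h1
          _ = d[(j:ℕ) - (i:ℕ)]'(by omega) := idxd _ _ _ _ (by omega)
          _ = cl[(i:ℕ) + ((j:ℕ) - (i:ℕ))]'(by omega) := h3 _ le_rfl
          _ = cl[(j:ℕ)]'(by omega) := idx _ _ _ _ (by omega)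
          _ = cl[(i:ℕ)]'(by omega) := hcij.symm
          _ = cl[(i:ℕ) + 0]'(by omega) := idx _ _ _ _ (by omega)
          _ = d[0]'(by omega) := (h3 0 (by omega)).symm
          _ = d.head hne := h2.symm
      rcases lt_or_gt_of_ne (fun h : i0 = j0 => hne0 (by rw [h])) with hlt | hlt
      · exact key i0 j0 hlt hij0
      · exact key j0 i0 hlt hij0.symm

lemma cycle_extract {α : Type*} [DecidableEq α] {r : α → α → Prop} {x : α}
    (h : Relation.TransGen r x x) :
    ∃ xs : List α, xs ≠ [] ∧ xs.Nodup ∧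
      ∀ v (hv : v ∈ xs), r v (xs.next v hv) := by
  rw [Relation.TransGen.head'_iff] at h
  obtain ⟨b, hxb, hbx⟩ := h
  obtain ⟨l, hl, hlast⟩ := List.exists_isChain_cons_of_relationReflTransGen hbx
  have hchain : (x :: b :: l).Chain' r := List.IsChain.cons_cons hxb hl
  have hcyc : ∀ hne : (x :: b :: l) ≠ [], (x :: b :: l).getLast hne = (x :: b :: l).head hne := by
    intro hne
    rw [List.getLast_cons_cons] at *
    exact hlast
  obtain ⟨d, hd2, hdchain, hdcyc, hdnodup⟩ :=
    cycle_extract' (x :: b :: l).length (x :: b :: l) rfl (by simp) hchain hcyc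
  refine ⟨d.dropLast, ?_, hdnodup, ?_⟩
  · have : d.dropLast.length = d.length - 1 := by simp
    exact List.ne_nil_of_length_pos (by omega)
  · set xs := d.dropLast with hxs
    have hxslen : xs.length = d.length - 1 := by simp [hxs]
    have hdne : d ≠ [] := List.ne_nil_of_length_pos (by omega)
    have hgetd : ∀ (k : ℕ) (hk : k < xs.length), xs[k] = d[k]'(by omega) := by
      intro k hk
      exact List.getElem_dropLast ..
    have hstep : ∀ (k : ℕ) (hk : k + 1 < d.length), r (d[k]'(by omega)) (d[k+1]) := by
      intro k hk
      exact List.isChain_iff_getElem.mp hdchain k (by omega)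
    intro v hv
    obtain ⟨i, hiv⟩ := List.get_of_mem hv
    subst hiv
    erw [List.next_getElem xs hdnodup i i.2]
    simp only [List.get_eq_getElem]
    by_cases hi : (i : ℕ) + 1 < xs.length
    · have : ((i : ℕ) + 1) % xs.length = (i : ℕ) + 1 := Nat.mod_eq_of_lt hi
      simp_rw [this]
      rw [hgetd i i.2, hgetd ((i:ℕ)+1) hi]
      exact hstep i (by omega)
    · have hieq : (i : ℕ) + 1 = xs.length := by have := i.2; omega
      have : ((i : ℕ) + 1) % xs.length = 0 := by rw [hieq, Nat.mod_self]
      simp_rw [this]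
      have h0 : xs[0]'(by omega) = d[(i:ℕ)+1]'(by omega) := by
        have e1 : xs[0]'(by omega) = d[0]'(by omega) := hgetd 0 (by omega)
        have e2 : d.getLast hdne = d.head hdne := hdcyc hdne
        rw [List.getLast_eq_getElem, List.head_eq_getElem_zero] at e2
        have e3 : d[(i:ℕ)+1]'(by omega) = d[d.length - 1]'(by omega) := by
          congr 1; omega
        rw [e1, e3, e2]
      rw [h0, hgetd i i.2]
      exact hstep i (by omega)

lemma exists_partner {G : SimpleGraph V} {M : Set (Sym2 V)} (hM : IsMatchingIn G M)
    (hperf : sat M = Set.univ) :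
    ∃ p : V → V, (∀ v, s(v, p v) ∈ M) ∧ (∀ v w, s(v, w) ∈ M → w = p v) := by
  have hex : ∀ v : V, ∃ w, s(v, w) ∈ M := by
    intro v
    have hv : v ∈ sat M := hperf ▸ Set.mem_univ v
    obtain ⟨e, heM, hve⟩ := hv
    induction e using Sym2.ind with
    | _ a b =>
      rw [Sym2.mem_iff] at hve
      rcases hve with rfl | rfl
      · exact ⟨b, heM⟩
      · exact ⟨a, Sym2.eq_swap ▸ heM⟩
  choose p hp using hex
  refine ⟨p, hp, ?_⟩
  intro v w hw
  have heq : s(v, w) = s(v, p v) := by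
    by_contra hne
    exact hM.2 _ hw _ (hp v) hne v ⟨Sym2.mem_mk_left v w, Sym2.mem_mk_left v (p v)⟩
  rw [Sym2.eq_iff] at heq
  rcases heq with ⟨_, h⟩ | ⟨h1, h2⟩
  · exact h
  · exact h2.trans h1

theorem stmt5 [Fintype V] (G : SimpleGraph V) (X : Set V) (M : Set (Sym2 V))
    (hbip : ∀ v w, G.Adj v w → (v ∈ X ↔ w ∉ X)) (hM : IsMatchingIn G M)
    (hperf : sat M = Set.univ) :
    (∀ N : Set (Sym2 V), IsMatchingIn G N → sat N = Set.univ → N = M) ↔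
      ∀ x, ¬ Relation.TransGen (DArc G M X) x x := by
  classical
  obtain ⟨p, hpM, hpu⟩ := exists_partner hM hperf
  have hadj : ∀ v, G.Adj v (p v) := fun v => G.mem_edgeSet.mp (hM.1 (hpM v))
  have hpp : ∀ v, p (p v) = v := fun v =>
    (hpu (p v) v (Sym2.eq_swap ▸ hpM v)).symm
  have pinj : Function.Injective p := Function.LeftInverse.injective hpp
  have hpX : ∀ v, v ∈ X ↔ p v ∉ X := fun v => hbip v (p v) (hadj v)
  constructor
  · intro huniq x hx
    obtain ⟨xs, hxsne, hnodup, harc⟩ := cycle_extract hx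
    set nxt : V → V := fun v => if h : v ∈ xs then xs.next v h else v with hnxt
    have harc' : ∀ v (hv : v ∈ xs), DArc G M X v (nxt v) := by
      intro v hv
      have : nxt v = xs.next v hv := dif_pos hv
      rw [this]
      exact harc v hv
    have hnmem : ∀ v ∈ xs, nxt v ∈ xs := by
      intro v hv
      have : nxt v = xs.next v hv := dif_pos hv
      rw [this]
      exact List.next_mem ..
    have hninj : ∀ v ∈ xs, ∀ w ∈ xs, nxt v = nxt w → v = w := by
      intro v hv w hw h
      have h1 : nxt v = xs.next v hv := dif_pos hv
      have h2 : nxt w = xs.next w hw := dif_pos hw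
      rw [h1, h2] at h
      have p1 := List.prev_next xs hnodup v hv
      have p2 := List.prev_next xs hnodup w hw
      rw [← p1, ← p2]
      simp only [h]
    have hnsurj : ∀ u ∈ xs, ∃ v ∈ xs, nxt v = u := by
      intro u hu
      refine ⟨xs.prev u hu, List.prev_mem .., ?_⟩
      have : nxt (xs.prev u hu) = xs.next (xs.prev u hu) (List.prev_mem ..) :=
        dif_pos (List.prev_mem ..)
      rw [this]
      exact List.next_prev xs hnodup u hu
    have hXxs : ∀ v ∈ xs, v ∈ X := fun v hv => (harc' v hv).1
    have hvnxt : ∀ v ∈ xs, v ≠ nxt v := fun v hv => (harc' v hv).2.2.1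
    have hedge : ∀ v ∈ xs, s(v, p (nxt v)) ∈ G.edgeSet ∧ s(v, p (nxt v)) ∉ M := by
      intro v hv
      obtain ⟨_, _, _, _, y, hyM, hyE, hyM'⟩ := harc' v hv
      have hy : y = p (nxt v) := hpu _ _ hyM
      rw [← hy]
      exact ⟨hyE, hyM'⟩
    -- the cycle-touched vertices
    set inC : V → Prop := fun v => v ∈ xs ∨ ∃ u ∈ xs, v = p u with hinC
    have hpC : ∀ v, ¬ inC v → ¬ inC (p v) := by
      intro v hv hpv
      rcases hpv with h | ⟨u, hu, hpu'⟩
      · exact hv (Or.inr ⟨p v, h, (hpp v).symm⟩)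
      · exact hv (Or.inl (pinj hpu' ▸ hu))
    set NN : Set (Sym2 V) :=
      {e | (e ∈ M ∧ ∀ v ∈ e, ¬ inC v) ∨ ∃ v ∈ xs, e = s(v, p (nxt v))} with hNN
    have hNmatch : IsMatchingIn G NN := by
      constructor
      · intro e he
        rcases he with ⟨heM, _⟩ | ⟨v, hv, rfl⟩
        · exact hM.1 heM
        · exact (hedge v hv).1
      · rintro e he f hf hef v ⟨hve, hvf⟩
        rcases he with ⟨heM, heC⟩ | ⟨v1, hv1, rfl⟩ <;>
          rcases hf with ⟨hfM, hfC⟩ | ⟨v2, hv2, rfl⟩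
        · exact hM.2 e heM f hfM hef v ⟨hve, hvf⟩
        · apply heC v hve
          rw [Sym2.mem_iff] at hvf
          rcases hvf with rfl | rfl
          · exact Or.inl hv2
          · exact Or.inr ⟨nxt v2, hnmem v2 hv2, rfl⟩
        · apply hfC v hvf
          rw [Sym2.mem_iff] at hve
          rcases hve with rfl | rfl
          · exact Or.inl hv1
          · exact Or.inr ⟨nxt v1, hnmem v1 hv1, rfl⟩
        · rw [Sym2.mem_iff] at hve hvf
          have hpnX : ∀ w ∈ xs, p (nxt w) ∉ X := fun w hw =>
            (hpX (nxt w)).mp (hXxs _ (hnmem w hw))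
          rcases hve with rfl | h1 <;> rcases hvf with h2 | h2
          · exact hef (h2 ▸ rfl)
          · exact (hpnX v2 hv2) (h2 ▸ hXxs v hv1)
          · exact (hpnX v1 hv1) ((h1.symm.trans h2) ▸ hXxs v2 hv2)
          · have : nxt v1 = nxt v2 := pinj (h1.symm.trans h2)
            exact hef ((hninj v1 hv1 v2 hv2 this) ▸ rfl)
    have hNsat : sat NN = Set.univ := by
      ext v
      simp only [Set.mem_univ, iff_true]
      by_cases hv : v ∈ xs
      · exact ⟨s(v, p (nxt v)), Or.inr ⟨v, hv, rfl⟩, Sym2.mem_mk_left ..⟩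
      · by_cases hv2 : ∃ u ∈ xs, v = p u
        · obtain ⟨u, hu, rfl⟩ := hv2
          obtain ⟨w, hw, hwu⟩ := hnsurj u hu
          exact ⟨s(w, p (nxt w)), Or.inr ⟨w, hw, rfl⟩, by rw [hwu]; exact Sym2.mem_mk_right ..⟩
        · have hvC : ¬ inC v := by
            intro h
            rcases h with h | h
            · exact hv h
            · exact hv2 h
          refine ⟨s(v, p v), Or.inl ⟨hpM v, ?_⟩, Sym2.mem_mk_left ..⟩
          intro w hw
          rw [Sym2.mem_iff] at hw
          rcases hw with rfl | rfl
          · exact hvC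
          · exact hpC v hvC
    have heqNM := huniq NN hNmatch hNsat
    obtain ⟨z, hz⟩ := List.exists_mem_of_ne_nil xs hxsne
    have hzN : s(z, p (nxt z)) ∈ NN := Or.inr ⟨z, hz, rfl⟩
    rw [heqNM] at hzN
    exact (hedge z hz).2 hzN
  · intro hacyc N hN hNs
    by_contra hne
    obtain ⟨q, hqN, hqu⟩ := exists_partner hN hNs
    have hadjN : ∀ v, G.Adj v (q v) := fun v => G.mem_edgeSet.mp (hN.1 (hqN v))
    have hqq : ∀ v, q (q v) = v := fun v =>
      (hqu (q v) v (Sym2.eq_swap ▸ hqN v)).symm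
    have qinj : Function.Injective q := Function.LeftInverse.injective hqq
    -- find a starting vertex
    have hstart : ∃ x, x ∈ X ∧ q x ≠ p x := by
      have hdiff : ∃ e, (e ∈ N ∧ e ∉ M) ∨ (e ∈ M ∧ e ∉ N) := by
        by_contra hno
        push_neg at hno
        apply hne
        ext e
        exact ⟨fun h => (hno e).1 h, fun h => by
          by_contra h2
          exact h2 ((hno e).2 h)⟩
      obtain ⟨a, b, he⟩ : ∃ a b, ((s(a,b) ∈ N ∧ s(a,b) ∉ M) ∨ (s(a,b) ∈ M ∧ s(a,b) ∉ N)) := by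
        obtain ⟨e, he⟩ := hdiff
        induction e using Sym2.ind with
        | _ a b => exact ⟨a, b, he⟩
      have hadjab : G.Adj a b := by
        rcases he with ⟨h, _⟩ | ⟨h, _⟩
        · exact G.mem_edgeSet.mp (hN.1 h)
        · exact G.mem_edgeSet.mp (hM.1 h)
      -- wlog a ∈ X
      have key : ∀ a b : V, ((s(a,b) ∈ N ∧ s(a,b) ∉ M) ∨ (s(a,b) ∈ M ∧ s(a,b) ∉ N)) →
          a ∈ X → q a ≠ p a := by
        intro a b he haX
        rcases he with ⟨h1, h2⟩ | ⟨h1, h2⟩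
        · have hqa : b = q a := hqu a b h1
          intro hqp
          apply h2
          rw [hqa, hqp]
          exact hpM a
        · have hpa : b = p a := hpu a b h1
          intro hqp
          apply h2
          rw [hpa, ← hqp]
          exact hqN a
      by_cases haX : a ∈ X
      · exact ⟨a, haX, key a b he haX⟩
      · have hbX : b ∈ X := by
          have := hbip a b hadjab
          by_contra h
          exact haX (this.mpr h)
        refine ⟨b, hbX, key b a ?_ hbX⟩
        rwa [Sym2.eq_swap]
    obtain ⟨x₀, hx₀X, hx₀⟩ := hstart
    set f : V → V := fun v => p (q v) with hf
    have hInv : ∀ x, (x ∈ X ∧ q x ≠ p x) →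
        DArc G M X x (f x) ∧ (f x ∈ X ∧ q (f x) ≠ p (f x)) := by
      rintro x ⟨hxX, hxqp⟩
      have hqM : s(f x, q x) ∈ M := Sym2.eq_swap ▸ hpM (q x)
      have hqxX : q x ∉ X := (hbip x (q x) (hadjN x)).mp hxX
      have hfxX : f x ∈ X := by
        have h := hbip (q x) (f x) (hadj (q x))
        by_contra h2
        exact hqxX (h.mpr h2)
      have hxfx : x ≠ f x := by
        intro h
        apply hxqp
        have h2 := hqM
        rw [← h] at h2
        exact hpu x (q x) h2
      have hsxq_notM : s(x, q x) ∉ M := fun h => hxqp (hpu x (q x) h)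
      refine ⟨⟨hxX, hfxX, hxfx, ⟨p x, hpM x⟩, ⟨q x, hqM, hN.1 (hqN x), hsxq_notM⟩⟩,
        hfxX, ?_⟩
      have hpfx : p (f x) = q x := (hpu (f x) (q x) hqM).symm
      rw [hpfx]
      intro h
      exact hxfx (qinj h).symm
    set g : ℕ → V := fun n => f^[n] x₀ with hg
    have hgInv : ∀ n, g n ∈ X ∧ q (g n) ≠ p (g n) := by
      intro n
      induction n with
      | zero => exact ⟨hx₀X, hx₀⟩
      | succ n ih =>
        have h := (hInv _ ih).2
        have he : g (n+1) = f (g n) := Function.iterate_succ_apply' f n x₀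
        rw [he]
        exact h
    have hgarc : ∀ n, DArc G M X (g n) (g (n+1)) := by
      intro n
      have h := (hInv _ (hgInv n)).1
      have he : g (n+1) = f (g n) := Function.iterate_succ_apply' f n x₀
      rw [he]
      exact h
    have htrans : ∀ i k, Relation.TransGen (DArc G M X) (g i) (g (i + k + 1)) := by
      intro i k
      induction k with
      | zero => exact .single (hgarc i)
      | succ k ih =>
        have he : i + (k+1) + 1 = (i + k + 1) + 1 := by omega
        rw [he]
        exact ih.tail (hgarc _)
    have final : ∀ i j : ℕ, i < j → g i = g j → False := by
      intro i j hlt heq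
      have h := htrans i (j - i - 1)
      rw [show i + (j - i - 1) + 1 = j by omega, ← heq] at h
      exact hacyc _ h
    obtain ⟨i, j, hij, hgij⟩ := Finite.exists_ne_map_eq_of_infinite g
    rcases lt_or_gt_of_ne hij with h | h
    · exact final i j h hgij
    · exact final j i h hgij.symm
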